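/- (Steady-State Upper Bound Lemma.) Let 0 < p < c, let T > 0, let ℓ ≥ 1, and let (s_k)_{k∈ℤ} and (e_k)_{k∈ℤ} be real sequences with s_k < e_k < s_{k+1} for all k and s_{k+ℓ} = s_k + T, e_{k+ℓ} = e_k + T for all k (the entry and exit times into the covered set within each period). Let θ : ℝ → [0,1] be a position trajectory with period T and coverage time τ = Σ_{k=1}^ℓ (e_k − s_k) such that {t ∈ ℝ : θ(t) ∈ F} = ⋃_{k∈ℤ} [s_k, e_k], and suppose c·τ > p·T. Then every accumulation function Z for θ satisfies limsup_{t→∞} Z(t) = max over k ∈ {1,…,ℓ} and b ∈ {0,…,ℓ−1} of X_{k,b}, where X_{k,b} := p·(s_{k+1} − e_{k−b}) − c·Σ_{w=0}^{b−1} (e_{k−w} − s_{k−w}). -/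

import Mathlib

open MeasureTheory Filter Set

/-- A position trajectory `θ : ℝ → [0,1]` with period `T > 0` and coverage time `τ ≥ 0`
for the covered-position set `F ⊆ [0,1]`. -/
def IsTrajectory (F : Set ℝ) (θ : ℝ → ℝ) (T τ : ℝ) : Prop :=
  (∀ t : ℝ, θ t ∈ Set.Icc (0 : ℝ) 1) ∧ 0 < T ∧ 0 ≤ τ ∧
  (∀ t : ℝ, θ (t + T) = θ t) ∧
  (∀ t : ℝ, (∫ s in t..(t + T), F.indicator (fun _ => (1 : ℝ)) (θ s)) = τ)

/-- An accumulation function for the trajectory `θ`: a locally absolutely continuous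
nonnegative function `Z` (written as the integral of a locally integrable derivative `g`)
such that a.e. `Z' = p - c·1_F(θ t)` when `Z > 0` and `Z' = max (p - c·1_F(θ t)) 0`
when `Z = 0`. -/
def IsAccumulation (F : Set ℝ) (p c : ℝ) (θ : ℝ → ℝ) (Z : ℝ → ℝ) : Prop :=
  (∀ t : ℝ, 0 ≤ Z t) ∧
  ∃ g : ℝ → ℝ, MeasureTheory.LocallyIntegrable g MeasureTheory.volume ∧
    (∀ a b : ℝ, Z b - Z a = ∫ s in a..b, g s) ∧
    (∀ᵐ t : ℝ, (0 < Z t → g t = p - c * F.indicator (fun _ => (1 : ℝ)) (θ t)) ∧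
      (Z t = 0 → g t = max (p - c * F.indicator (fun _ => (1 : ℝ)) (θ t)) 0))

section SSUBAux

variable {F : Set ℝ} {p c : ℝ} {θ Z g : ℝ → ℝ}

/-- Pointwise a.e. consequences of the accumulation ODE. -/
private lemma ssub_ae (hp : 0 < p) (hpc : p < c) (hZ0 : ∀ t, 0 ≤ Z t)
    (hae : ∀ᵐ t : ℝ, (0 < Z t → g t = p - c * F.indicator (fun _ => (1 : ℝ)) (θ t)) ∧
      (Z t = 0 → g t = max (p - c * F.indicator (fun _ => (1 : ℝ)) (θ t)) 0)) :
    ∀ᵐ t : ℝ, (θ t ∉ F → g t = p) ∧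
      (θ t ∈ F → p - c ≤ g t ∧ g t ≤ 0 ∧ (0 < Z t → g t = p - c)) := by
  filter_upwards [hae] with t ht
  rcases (hZ0 t).lt_or_eq with h | h
  · have h1 := ht.1 h
    constructor
    · intro hF; rw [h1, Set.indicator_of_notMem hF]; ring
    · intro hF
      rw [h1, Set.indicator_of_mem hF]
      exact ⟨by linarith, by linarith, fun _ => by ring⟩
  · have h2 := ht.2 h.symm
    constructor
    · intro hF
      rw [h2, Set.indicator_of_notMem hF, mul_zero, sub_zero]
      exact max_eq_left hp.le
    · intro hF
      rw [h2, Set.indicator_of_mem hF]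
      have hm : max (p - c * 1) 0 = 0 := max_eq_right (by linarith)
      rw [hm]
      exact ⟨by linarith, le_refl _, fun hz => absurd h.symm (ne_of_gt hz)⟩

private lemma ae_ne_point (b : ℝ) : ∀ᵐ x : ℝ, x ≠ b := by
  have : (volume : Measure ℝ) {b} = 0 := Real.volume_singleton
  rw [MeasureTheory.ae_iff]
  simpa using this

private lemma ssub_gint (hgi : MeasureTheory.LocallyIntegrable g MeasureTheory.volume)
    (a b : ℝ) : IntervalIntegrable g volume a b :=
  (hgi.integrableOn_isCompact isCompact_uIcc).intervalIntegrable

variable (hgi : MeasureTheory.LocallyIntegrable g MeasureTheory.volume)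
  (hint : ∀ a b : ℝ, Z b - Z a = ∫ s in a..b, g s)

include hgi hint

/-- Growth at rate `p` on gaps. -/
private lemma ssub_gap
    (haeg : ∀ᵐ t : ℝ, (θ t ∉ F → g t = p) ∧
      (θ t ∈ F → p - c ≤ g t ∧ g t ≤ 0 ∧ (0 < Z t → g t = p - c)))
    {a b : ℝ} (hab : a ≤ b) (hout : ∀ t ∈ Set.Ioo a b, θ t ∉ F) :
    Z b = Z a + p * (b - a) := by
  have hcong : (∫ s in a..b, g s) = ∫ _s in a..b, (p : ℝ) := by
    apply intervalIntegral.integral_congr_ae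
    filter_upwards [haeg, ae_ne_point b] with x hx hxb hmem
    rw [Set.uIoc_of_le hab] at hmem
    have hxo : x ∈ Set.Ioo a b := ⟨hmem.1, lt_of_le_of_ne hmem.2 hxb⟩
    exact hx.1 (hout x hxo)
  have h := hint a b
  rw [hcong, intervalIntegral.integral_const, smul_eq_mul] at h
  linarith [h]

/-- Monotone decrease on coverage intervals. -/
private lemma ssub_cov_mono
    (haeg : ∀ᵐ t : ℝ, (θ t ∉ F → g t = p) ∧
      (θ t ∈ F → p - c ≤ g t ∧ g t ≤ 0 ∧ (0 < Z t → g t = p - c)))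
    {a b : ℝ} (hin : ∀ t ∈ Set.Ioo a b, θ t ∈ F)
    {t t' : ℝ} (hat : a ≤ t) (htt : t ≤ t') (htb : t' ≤ b) :
    Z t' ≤ Z t := by
  have h := hint t t'
  have hle : (∫ s in t..t', g s) ≤ ∫ _s in t..t', (0 : ℝ) := by
    apply intervalIntegral.integral_mono_ae_restrict htt (ssub_gint hgi t t')
      intervalIntegrable_const
    have h1 : ∀ᵐ x ∂(volume.restrict (Set.Icc t t')),
        (θ x ∉ F → g x = p) ∧ (θ x ∈ F → p - c ≤ g x ∧ g x ≤ 0 ∧ (0 < Z x → g x = p - c)) :=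
      ae_restrict_of_ae haeg
    have h2 : ∀ᵐ x ∂(volume.restrict (Set.Icc t t')), x ≠ a ∧ x ≠ b :=
      ae_restrict_of_ae ((ae_ne_point a).and (ae_ne_point b))
    have h3 : ∀ᵐ x ∂(volume.restrict (Set.Icc t t')), x ∈ Set.Icc t t' :=
      ae_restrict_mem measurableSet_Icc
    filter_upwards [h1, h2, h3] with x hx hxab hxm
    have hxo : x ∈ Set.Ioo a b :=
      ⟨lt_of_le_of_ne (hat.trans hxm.1) (Ne.symm hxab.1), lt_of_le_of_ne (hxm.2.trans htb) hxab.2⟩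
    exact (hx.2 (hin x hxo)).2.1
  rw [intervalIntegral.integral_const, smul_eq_mul, mul_zero] at hle
  linarith [h]

/-- Lower bound from slope `p - c` on coverage intervals. -/
private lemma ssub_cov_lower
    (haeg : ∀ᵐ t : ℝ, (θ t ∉ F → g t = p) ∧
      (θ t ∈ F → p - c ≤ g t ∧ g t ≤ 0 ∧ (0 < Z t → g t = p - c)))
    {a b : ℝ} (hin : ∀ t ∈ Set.Ioo a b, θ t ∈ F)
    {t t' : ℝ} (hat : a ≤ t) (htt : t ≤ t') (htb : t' ≤ b) :
    Z t + (p - c) * (t' - t) ≤ Z t' := by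
  have h := hint t t'
  have hle : (∫ _s in t..t', (p - c : ℝ)) ≤ ∫ s in t..t', g s := by
    apply intervalIntegral.integral_mono_ae_restrict htt intervalIntegrable_const
      (ssub_gint hgi t t')
    have h1 : ∀ᵐ x ∂(volume.restrict (Set.Icc t t')),
        (θ x ∉ F → g x = p) ∧ (θ x ∈ F → p - c ≤ g x ∧ g x ≤ 0 ∧ (0 < Z x → g x = p - c)) :=
      ae_restrict_of_ae haeg
    have h2 : ∀ᵐ x ∂(volume.restrict (Set.Icc t t')), x ≠ a ∧ x ≠ b :=
      ae_restrict_of_ae ((ae_ne_point a).and (ae_ne_point b))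
    have h3 : ∀ᵐ x ∂(volume.restrict (Set.Icc t t')), x ∈ Set.Icc t t' :=
      ae_restrict_mem measurableSet_Icc
    filter_upwards [h1, h2, h3] with x hx hxab hxm
    have hxo : x ∈ Set.Ioo a b :=
      ⟨lt_of_le_of_ne (hat.trans hxm.1) (Ne.symm hxab.1), lt_of_le_of_ne (hxm.2.trans htb) hxab.2⟩
    exact (hx.2 (hin x hxo)).1
  rw [intervalIntegral.integral_const, smul_eq_mul] at hle
  nlinarith [h, hle]

/-- Exact slope when `Z` stays positive on a coverage interval. -/
private lemma ssub_cov_pos_eq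
    (haeg : ∀ᵐ t : ℝ, (θ t ∉ F → g t = p) ∧
      (θ t ∈ F → p - c ≤ g t ∧ g t ≤ 0 ∧ (0 < Z t → g t = p - c)))
    {a b : ℝ} (hin : ∀ t ∈ Set.Ioo a b, θ t ∈ F)
    {t t' : ℝ} (hat : a ≤ t) (htt : t ≤ t') (htb : t' ≤ b)
    (hpos : ∀ x ∈ Set.Icc t t', 0 < Z x) :
    Z t' = Z t + (p - c) * (t' - t) := by
  have hcong : (∫ s in t..t', g s) = ∫ _s in t..t', (p - c : ℝ) := by
    apply intervalIntegral.integral_congr_ae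
    filter_upwards [haeg, ae_ne_point b] with x hx hxb hmem
    rw [Set.uIoc_of_le htt] at hmem
    have hxo : x ∈ Set.Ioo a b :=
      ⟨lt_of_le_of_lt hat hmem.1, lt_of_le_of_ne (hmem.2.trans htb) hxb⟩
    exact (hx.2 (hin x hxo)).2.2 (hpos x ⟨hmem.1.le, hmem.2⟩)
  have h := hint t t'
  rw [hcong, intervalIntegral.integral_const, smul_eq_mul] at h
  linarith [h]

/-- The reflection formula on a coverage interval. -/
private lemma ssub_cov_refl (hZ0 : ∀ t, 0 ≤ Z t)
    (haeg : ∀ᵐ t : ℝ, (θ t ∉ F → g t = p) ∧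
      (θ t ∈ F → p - c ≤ g t ∧ g t ≤ 0 ∧ (0 < Z t → g t = p - c)))
    {a b : ℝ} (hab : a ≤ b) (hin : ∀ t ∈ Set.Ioo a b, θ t ∈ F)
    {t : ℝ} (ht : t ∈ Set.Icc a b) :
    Z t = max (Z a + (p - c) * (t - a)) 0 := by
  rcases (hZ0 t).lt_or_eq with hpos | hzero
  · have hpall : ∀ x ∈ Set.Icc a t, 0 < Z x := by
      intro x hx
      have := ssub_cov_mono hgi hint haeg hin hx.1 hx.2 ht.2
      linarith
    have heq := ssub_cov_pos_eq hgi hint haeg hin (le_refl a) ht.1 ht.2 hpall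
    have h0 : 0 ≤ Z a + (p - c) * (t - a) := by rw [← heq]; exact (hZ0 t)
    rw [heq, max_eq_left h0]
  · have h1 := ssub_cov_lower hgi hint haeg hin (le_refl a) ht.1 ht.2
    rw [← hzero] at h1 ⊢
    exact (max_eq_right (by linarith)).symm

end SSUBAux

/-- sums of an `ℓ`-periodic function over any window of length `ℓ` agree. -/
private lemma ssub_window {f : ℤ → ℝ} {ℓ : ℕ} (hℓ : 1 ≤ ℓ)
    (hper : ∀ k : ℤ, f (k + (ℓ : ℤ)) = f k) (m : ℤ) :
    ∑ w ∈ Finset.range ℓ, f (m - (w : ℤ)) = ∑ j ∈ Finset.Icc (1 : ℤ) (ℓ : ℤ), f j := by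
  obtain ⟨n, rfl⟩ : ∃ n, ℓ = n + 1 := ⟨ℓ - 1, (Nat.succ_pred_eq_of_pos hℓ).symm⟩
  have step : ∀ m : ℤ, ∑ w ∈ Finset.range (n + 1), f ((m + 1) - (w : ℤ))
      = ∑ w ∈ Finset.range (n + 1), f (m - (w : ℤ)) := by
    intro m
    rw [Finset.sum_range_succ' (fun w => f ((m + 1) - (w : ℤ))) n,
      Finset.sum_range_succ (fun w => f (m - (w : ℤ))) n]
    have h1 : ∀ i : ℕ, f ((m + 1) - ((i : ℤ) + 1)) = f (m - (i : ℤ)) := by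
      intro i; congr 1; ring
    have h2 : f ((m + 1) - (0 : ℤ)) = f (m - (n : ℤ)) := by
      have := hper (m - (n : ℤ))
      have he : m - (n : ℤ) + ((n : ℤ) + 1) = m + 1 - 0 := by push_cast; ring
      rw [show ((n + 1 : ℕ) : ℤ) = (n : ℤ) + 1 by push_cast; ring] at this
      rw [← he, this]
    push_cast
    rw [h2]
    exact congrArg (· + f (m - (n : ℤ))) (Finset.sum_congr rfl fun i _ => h1 i)
  -- all windows are equal
  have const : ∀ m : ℤ, ∑ w ∈ Finset.range (n + 1), f (m - (w : ℤ))
      = ∑ w ∈ Finset.range (n + 1), f ((0 : ℤ) - (w : ℤ)) := by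
    intro m
    induction m using Int.induction_on with
    | zero => rfl
    | succ k ih => rw [step (k : ℤ)]; exact ih
    | pred k ih =>
      have h := step (-(k : ℤ) - 1)
      rw [show (-(k : ℤ) - 1 + 1) = -(k : ℤ) by ring] at h
      rw [← h]; exact ih
  rw [const m, ← const ((n : ℤ) + 1)]
  -- base window at m = ℓ equals sum over Icc 1 ℓ
  refine Finset.sum_bij' (fun (w : ℕ) _ => ((n : ℤ) + 1) - (w : ℤ))
    (fun (j : ℤ) _ => (((n : ℤ) + 1) - j).toNat) ?_ ?_ ?_ ?_ ?_
  · intro a ha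
    simp only [Finset.mem_range] at ha
    simp only [Finset.mem_Icc]
    push_cast
    omega
  · intro a ha
    simp only [Finset.mem_Icc] at ha
    simp only [Finset.mem_range]
    push_cast
    omega
  · intro a ha
    simp only [Finset.mem_range] at ha
    omega
  · intro a ha
    simp only [Finset.mem_Icc] at ha
    omega
  · intro a ha
    rfl

/-- Steady-state upper bound lemma: with entry times `s_k` and exit times `e_k` of the
covered set in each period, under the stability condition the limsup of every
accumulation function equals the maximum of the quantities
`X_{k,b} = p·(s_{k+1} − e_{k−b}) − c·Σ_{w=0}^{b−1} (e_{k−w} − s_{k−w})`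
over `k ∈ {1,…,ℓ}` and `b ∈ {0,…,ℓ−1}`. -/
theorem steady_state_upper_bound (F : Set ℝ) (hF : MeasurableSet F) (p c : ℝ)
    (hp : 0 < p) (hpc : p < c) (T : ℝ) (hT : 0 < T) (ℓ : ℕ) (hℓ : 1 ≤ ℓ)
    (s e : ℤ → ℝ)
    (hse : ∀ k : ℤ, s k < e k ∧ e k < s (k + 1))
    (hsper : ∀ k : ℤ, s (k + (ℓ : ℤ)) = s k + T)
    (heper : ∀ k : ℤ, e (k + (ℓ : ℤ)) = e k + T)
    (θ : ℝ → ℝ)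
    (htraj : IsTrajectory F θ T (∑ k ∈ Finset.Icc (1 : ℤ) (ℓ : ℤ), (e k - s k)))
    (hcov : {t : ℝ | θ t ∈ F} = ⋃ k : ℤ, Set.Icc (s k) (e k))
    (hstab : p * T < c * ∑ k ∈ Finset.Icc (1 : ℤ) (ℓ : ℤ), (e k - s k)) :
    ∀ Z : ℝ → ℝ, IsAccumulation F p c θ Z →
      IsGreatest
        {x : ℝ | ∃ k ∈ Finset.Icc (1 : ℤ) (ℓ : ℤ), ∃ b ∈ Finset.range ℓ,
          x = p * (s (k + 1) - e (k - (b : ℤ))) -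
            c * ∑ w ∈ Finset.range b, (e (k - (w : ℤ)) - s (k - (w : ℤ)))}
        (Filter.limsup Z Filter.atTop) := by
  intro Z hZ
  obtain ⟨hZ0, g, hgi, hint, hae⟩ := hZ
  have haeg := ssub_ae hp hpc hZ0 hae
  have smono : StrictMono s := strictMono_int_of_lt_succ fun k => (hse k).1.trans (hse k).2
  have emono : StrictMono e := strictMono_int_of_lt_succ fun k => (hse k).2.trans (hse (k + 1)).1
  have hmemF : ∀ t : ℝ, θ t ∈ F ↔ ∃ j : ℤ, t ∈ Set.Icc (s j) (e j) := by
    intro t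
    have := Set.ext_iff.1 hcov t
    simpa [Set.mem_iUnion] using this
  have hIn : ∀ k : ℤ, ∀ t ∈ Set.Ioo (s k) (e k), θ t ∈ F := fun k t ht =>
    (hmemF t).2 ⟨k, ht.1.le, ht.2.le⟩
  have hOut : ∀ k : ℤ, ∀ t ∈ Set.Ioo (e k) (s (k + 1)), θ t ∉ F := by
    intro k t ht hF'
    obtain ⟨j, hj⟩ := (hmemF t).1 hF'
    rcases le_or_gt j k with h | h
    · exact absurd (hj.2.trans (emono.monotone h)) (not_le.2 ht.1)
    · exact absurd ((smono.monotone (Int.add_one_le_iff.mpr h)).trans hj.1) (not_le.2 ht.2)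
  have R1 : ∀ k : ℤ, Z (e k) = max (Z (s k) + (p - c) * (e k - s k)) 0 := fun k =>
    ssub_cov_refl hgi hint hZ0 haeg (hse k).1.le (hIn k) ⟨(hse k).1.le, le_refl _⟩
  have R2 : ∀ k : ℤ, Z (s (k + 1)) = Z (e k) + p * (s (k + 1) - e k) := fun k =>
    ssub_gap hgi hint haeg (hse k).2.le (hOut k)
  set τ := ∑ k ∈ Finset.Icc (1 : ℤ) (ℓ : ℤ), (e k - s k) with hτdef
  set Δ := p * T - c * τ with hΔdef
  have hΔ : Δ < 0 := by rw [hΔdef]; linarith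
  set X : ℤ → ℕ → ℝ := fun k b => p * (s (k + 1) - e (k - (b : ℤ))) -
      c * ∑ w ∈ Finset.range b, (e (k - (w : ℤ)) - s (k - (w : ℤ))) with hX
  clear_value τ Δ X
  have hXper : ∀ (k : ℤ) (b : ℕ), X (k + (ℓ : ℤ)) b = X k b := by
    intro k b
    simp only [hX]
    have h1 : s (k + (ℓ : ℤ) + 1) = s (k + 1) + T := by
      rw [show k + (ℓ : ℤ) + 1 = (k + 1) + ℓ by ring, hsper]
    have h2 : e (k + (ℓ : ℤ) - b) = e (k - b) + T := by
      rw [show k + (ℓ : ℤ) - b = (k - b) + ℓ by ring, heper]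
    have h3 : ∀ w : ℕ, e (k + (ℓ : ℤ) - w) - s (k + (ℓ : ℤ) - w) = e (k - w) - s (k - w) := by
      intro w
      rw [show k + (ℓ : ℤ) - w = (k - w) + ℓ by ring, heper, hsper]
      ring
    rw [h1, h2, Finset.sum_congr rfl fun w _ => h3 w]
    ring
  have hwin : ∀ m : ℤ, ∑ w ∈ Finset.range ℓ, (e (m - (w : ℤ)) - s (m - (w : ℤ))) = τ := by
    intro m
    rw [hτdef]
    exact ssub_window (f := fun j => e j - s j) hℓ
      (by intro k; show e (k + (ℓ : ℤ)) - s (k + (ℓ : ℤ)) = e k - s k; rw [heper, hsper]; ring) m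
  have hXstep : ∀ (k : ℤ) (b : ℕ), X k (b + ℓ) = X k b + Δ := by
    intro k b
    simp only [hX, hΔdef]
    have hsplit : ∑ w ∈ Finset.range (b + ℓ), (e (k - (w : ℤ)) - s (k - (w : ℤ)))
        = (∑ w ∈ Finset.range b, (e (k - (w : ℤ)) - s (k - (w : ℤ))))
          + ∑ w ∈ Finset.range ℓ, (e ((k - b) - (w : ℤ)) - s ((k - b) - (w : ℤ))) := by
      rw [Finset.sum_range_add]
      congr 1
      exact Finset.sum_congr rfl fun w _ => by
        rw [show k - ((b + w : ℕ) : ℤ) = k - b - w by push_cast; ring]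
    have he2 : e (k - ((b + ℓ : ℕ) : ℤ)) = e (k - b) - T := by
      have h := heper (k - b - ℓ)
      rw [show k - b - (ℓ : ℤ) + ℓ = k - b by ring] at h
      rw [show k - ((b + ℓ : ℕ) : ℤ) = k - b - ℓ by push_cast; ring]
      linarith
    rw [hsplit, hwin (k - b), he2]
    ring
  have hXq : ∀ (q r : ℕ) (k : ℤ), X k (r + q * ℓ) = X k r + (q : ℝ) * Δ := by
    intro q
    induction q with
    | zero => intro r k; simp
    | succ q ih =>
      intro r k
      rw [show r + (q + 1) * ℓ = (r + q * ℓ) + ℓ by ring, hXstep, ih]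
      push_cast
      ring
  have hXmod : ∀ (k : ℤ) (b : ℕ), X k b ≤ X k (b % ℓ) := by
    intro k b
    have h := hXq (b / ℓ) (b % ℓ) k
    rw [Nat.mod_add_div'] at h
    rw [h]
    have h2 : (0 : ℝ) ≤ ((b / ℓ : ℕ) : ℝ) := Nat.cast_nonneg _
    nlinarith
  have hXsucc : ∀ (k : ℤ) (b : ℕ), X k (b + 1) = X k b
      + p * (e (k - (b : ℤ)) - e (k - (b : ℤ) - 1)) - c * (e (k - (b : ℤ)) - s (k - (b : ℤ))) := by
    intro k b
    simp only [hX]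
    rw [Finset.sum_range_succ, show (k - ((b + 1 : ℕ) : ℤ)) = k - (b : ℤ) - 1 by push_cast; ring]
    ring
  have hR2' : ∀ j : ℤ, Z (s j) = Z (e (j - 1)) + p * (s j - e (j - 1)) := by
    intro j
    have h := R2 (j - 1)
    rw [show j - 1 + 1 = j by ring] at h
    exact h
  have D1 : ∀ (b : ℕ) (k : ℤ), Z (e (k - (b : ℤ))) + X k b ≤ Z (s (k + 1)) := by
    intro b
    induction b with
    | zero =>
      intro k
      simp only [hX, Nat.cast_zero, sub_zero, Finset.range_zero, Finset.sum_empty, mul_zero]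
      rw [R2 k]
    | succ b ih =>
      intro k
      have h1 := ih k
      have hmax : Z (s (k - b)) + (p - c) * (e (k - b) - s (k - b)) ≤ Z (e (k - b)) := by
        rw [R1 (k - b)]; exact le_max_left _ _
      have hr2 := hR2' (k - (b : ℤ))
      rw [show k - (b : ℤ) - 1 = k - (b : ℤ) - 1 by ring] at hr2
      have hXs := hXsucc k b
      rw [show k - ((b + 1 : ℕ) : ℤ) = k - (b : ℤ) - 1 by push_cast; ring]
      linarith
  have D1' : ∀ (k : ℤ) (b : ℕ), X k b ≤ Z (s (k + 1)) := by
    intro k b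
    have := D1 b k
    have h0 := hZ0 (e (k - (b : ℤ)))
    linarith
  have D2 : ∀ (b : ℕ) (k : ℤ), (∃ b' : ℕ, b' < b ∧ Z (s (k + 1)) = X k b')
      ∨ Z (s (k + 1)) = Z (e (k - (b : ℤ))) + X k b := by
    intro b
    induction b with
    | zero =>
      intro k
      right
      simp only [hX, Nat.cast_zero, sub_zero, Finset.range_zero, Finset.sum_empty, mul_zero]
      rw [R2 k]
    | succ b ih =>
      intro k
      rcases ih k with ⟨b', hb', heq⟩ | heq
      · exact Or.inl ⟨b', hb'.trans (Nat.lt_succ_self b), heq⟩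
      · rcases le_or_gt (Z (s (k - b)) + (p - c) * (e (k - b) - s (k - b))) 0 with hle | hgt
        · left
          refine ⟨b, Nat.lt_succ_self b, ?_⟩
          have hz : Z (e (k - (b : ℤ))) = 0 := by rw [R1 (k - b)]; exact max_eq_right hle
          rw [heq, hz, zero_add]
        · right
          have hz : Z (e (k - (b : ℤ))) = Z (s (k - b)) + (p - c) * (e (k - b) - s (k - b)) := by
            rw [R1 (k - b)]; exact max_eq_left hgt.le
          have hr2 := hR2' (k - (b : ℤ))
          have hXs := hXsucc k b
          rw [show k - ((b + 1 : ℕ) : ℤ) = k - (b : ℤ) - 1 by push_cast; ring]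
          linarith
  have hsn : ∀ (n : ℕ) (k : ℤ), s (k + (n : ℤ) * ℓ) = s k + n * T := by
    intro n
    induction n with
    | zero => intro k; simp
    | succ n ih =>
      intro k
      rw [show k + ((n + 1 : ℕ) : ℤ) * ℓ = (k + (n : ℤ) * ℓ) + ℓ by push_cast; ring, hsper, ih]
      push_cast
      ring
  have hXpern : ∀ (n : ℕ) (k : ℤ) (b : ℕ), X (k + (n : ℤ) * ℓ) b = X k b := by
    intro n
    induction n with
    | zero => intro k b; simp
    | succ n ih =>
      intro k b
      rw [show k + ((n + 1 : ℕ) : ℤ) * ℓ = (k + (n : ℤ) * ℓ) + ℓ by push_cast; ring, hXper, ih]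
  have hrne : (Finset.range ℓ).Nonempty := ⟨0, Finset.mem_range.2 hℓ⟩
  set Mk : ℤ → ℝ := fun k => (Finset.range ℓ).sup' hrne (X k) with hMk
  clear_value Mk
  have hMk_le : ∀ k : ℤ, Mk k ≤ Z (s (k + 1)) := by
    intro k
    simp only [hMk]
    exact Finset.sup'_le _ _ fun b _ => D1' k b
  have hXle : ∀ (k : ℤ) (b : ℕ), b < ℓ → X k b ≤ Mk k := by
    intro k b hb
    simp only [hMk]
    exact Finset.le_sup' _ (Finset.mem_range.2 hb)
  have hMkpern : ∀ (n : ℕ) (k : ℤ), Mk (k + (n : ℤ) * ℓ) = Mk k := by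
    intro n k
    simp only [hMk]
    exact Finset.sup'_congr hrne rfl fun b _ => hXpern n k b
  obtain ⟨q0, hq0⟩ := exists_nat_ge (Z (e 0) / (-Δ))
  have hq0' : Z (e 0) + (q0 : ℝ) * Δ ≤ 0 := by
    rw [div_le_iff₀ (by linarith : (0 : ℝ) < -Δ)] at hq0
    nlinarith
  have Eup : ∀ k : ℤ, ((q0 * ℓ : ℕ) : ℤ) ≤ k → Z (s (k + 1)) ≤ Mk k := by
    intro k hk
    have hk0 : (0 : ℤ) ≤ k := le_trans (by positivity) hk
    have hbk : (k.toNat : ℤ) = k := Int.toNat_of_nonneg hk0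
    rcases D2 k.toNat k with ⟨b', hb', heq⟩ | heq
    · rw [heq]
      exact (hXmod k b').trans (hXle k _ (Nat.mod_lt _ (by omega)))
    · have hkb : k - (k.toNat : ℤ) = 0 := by omega
      rw [hkb] at heq
      have h2 : X k k.toNat = X k (k.toNat % ℓ) + ((k.toNat / ℓ : ℕ) : ℝ) * Δ := by
        have h := hXq (k.toNat / ℓ) (k.toNat % ℓ) k
        rwa [Nat.mod_add_div'] at h
      have hqb : q0 ≤ k.toNat / ℓ := by
        have h1 : q0 * ℓ ≤ k.toNat := by omega
        exact Nat.le_div_iff_mul_le (by omega) |>.2 h1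
      have h3 : (q0 : ℝ) ≤ ((k.toNat / ℓ : ℕ) : ℝ) := by exact_mod_cast hqb
      have h4 : ((k.toNat / ℓ : ℕ) : ℝ) * Δ ≤ (q0 : ℝ) * Δ :=
        mul_le_mul_of_nonpos_right h3 hΔ.le
      have h5 : X k (k.toNat % ℓ) ≤ Mk k := hXle k _ (Nat.mod_lt _ (by omega))
      rw [heq, h2]
      have h6 : Z (e 0) + ((k.toNat / ℓ : ℕ) : ℝ) * Δ ≤ 0 :=
        le_trans (by linarith [h4]) hq0'
      linarith
  set K : ℤ := max ((q0 * ℓ : ℕ) : ℤ) 1 with hK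
  have hEeq : ∀ k : ℤ, K ≤ k → Z (s (k + 1)) = Mk k := fun k hk =>
    le_antisymm (Eup k (le_trans (le_max_left _ _) hk)) (hMk_le k)
  have hdecomp : ∀ k : ℤ, 1 ≤ k → ∃ k' : ℤ, k' ∈ Finset.Icc (1 : ℤ) (ℓ : ℤ)
      ∧ ∃ n : ℕ, k = k' + (n : ℤ) * ℓ := by
    intro k hk
    have hl0 : (0 : ℤ) < (ℓ : ℤ) := by exact_mod_cast hℓ
    refine ⟨(k - 1) % ℓ + 1, ?_, ((k - 1) / ℓ).toNat, ?_⟩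
    · simp only [Finset.mem_Icc]
      constructor
      · have := Int.emod_nonneg (k - 1) (by omega : (ℓ : ℤ) ≠ 0)
        omega
      · have := Int.emod_lt_of_pos (k - 1) hl0
        omega
    · have h1 := Int.mul_ediv_add_emod (k - 1) ℓ
      have h2 : 0 ≤ (k - 1) / (ℓ : ℤ) := Int.ediv_nonneg (by omega) (by omega)
      rw [Int.toNat_of_nonneg h2]
      linear_combination -h1
  have hPne : ((Finset.Icc (1 : ℤ) (ℓ : ℤ)) ×ˢ Finset.range ℓ).Nonempty := by
    have h1 : (1 : ℤ) ≤ (ℓ : ℤ) := by exact_mod_cast hℓ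
    exact ⟨(1, 0), by
      simp only [Finset.mem_product, Finset.mem_Icc, Finset.mem_range]
      exact ⟨⟨le_refl _, h1⟩, hℓ⟩⟩
  set M : ℝ := ((Finset.Icc (1 : ℤ) (ℓ : ℤ)) ×ˢ Finset.range ℓ).sup' hPne
      (fun q => X q.1 q.2) with hM
  clear_value M
  have hXleM : ∀ k' ∈ Finset.Icc (1 : ℤ) (ℓ : ℤ), ∀ b < ℓ, X k' b ≤ M := by
    intro k' hk' b hb
    have hmem : (k', b) ∈ (Finset.Icc (1 : ℤ) (ℓ : ℤ)) ×ˢ Finset.range ℓ :=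
      Finset.mem_product.2 ⟨hk', Finset.mem_range.2 hb⟩
    have h := Finset.le_sup' (fun q : ℤ × ℕ => X q.1 q.2) hmem
    rw [hM]
    exact h
  have hMkleM : ∀ k' ∈ Finset.Icc (1 : ℤ) (ℓ : ℤ), Mk k' ≤ M := by
    intro k' hk'
    simp only [hMk]
    exact Finset.sup'_le _ _ fun b hb => hXleM k' hk' b (Finset.mem_range.1 hb)
  obtain ⟨kb₀, hkb₀mem, hMeq⟩ := Finset.exists_mem_eq_sup' hPne (fun q => X q.1 q.2)
  rw [← hM] at hMeq
  obtain ⟨hk₀mem, hb₀mem⟩ := Finset.mem_product.1 hkb₀mem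
  have hMkM : ∀ k : ℤ, 1 ≤ k → Mk k ≤ M := by
    intro k hk
    obtain ⟨k', hk', n, rfl⟩ := hdecomp k hk
    rw [hMkpern n k']
    exact hMkleM k' hk'
  have hMk₀ : Mk kb₀.1 = M := by
    apply le_antisymm (hMkleM kb₀.1 hk₀mem)
    rw [hMeq]
    exact hXle kb₀.1 kb₀.2 (Finset.mem_range.1 hb₀mem)
  have hexk : ∀ (t : ℝ) (k0 : ℤ), s k0 ≤ t → ∃ k : ℤ, k0 ≤ k ∧ s k ≤ t ∧ t < s (k + 1) := by
    intro t k0 hk0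
    obtain ⟨n, hn⟩ := exists_nat_gt ((t - s 0) / T)
    have hbdd : ∀ z : ℤ, s z ≤ t → z ≤ (n : ℤ) * ℓ := by
      intro z hz
      by_contra hzc
      push_neg at hzc
      have h1 : s ((n : ℤ) * ℓ) ≤ s z := smono.monotone hzc.le
      have h2 := hsn n 0
      rw [zero_add] at h2
      rw [div_lt_iff₀ hT] at hn
      linarith
    obtain ⟨k, hk1, hk2⟩ := Int.exists_greatest_of_bdd ⟨(n : ℤ) * ℓ, hbdd⟩ ⟨k0, hk0⟩
    refine ⟨k, hk2 k0 hk0, hk1, ?_⟩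
    by_contra hc
    push_neg at hc
    exact absurd (hk2 (k + 1) hc) (by omega)
  have hub : ∀ t : ℝ, s (K + 1) ≤ t → Z t ≤ M := by
    intro t ht
    obtain ⟨k, hkK, hk1, hk2⟩ := hexk t (K + 1) ht
    have hK1 : (1 : ℤ) ≤ K := le_max_right _ _
    have hZsk : Z (s k) ≤ M := by
      have h := hEeq (k - 1) (by omega)
      rw [show k - 1 + 1 = k by ring] at h
      rw [h]
      exact hMkM (k - 1) (by omega)
    have hZsk1 : Z (s (k + 1)) ≤ M := by
      rw [hEeq k (by omega)]
      exact hMkM k (by omega)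
    rcases le_or_gt t (e k) with hte | hte
    · have := ssub_cov_mono hgi hint haeg (hIn k) (le_refl (s k)) hk1 hte
      linarith
    · have hgap := ssub_gap hgi hint haeg hte.le
        (fun x hx => hOut k x ⟨hx.1, hx.2.trans hk2⟩)
      have hr2 := R2 k
      have hmul : p * (t - e k) ≤ p * (s (k + 1) - e k) :=
        mul_le_mul_of_nonneg_left (by linarith) hp.le
      linarith
  have hbdd : ∀ᶠ t in Filter.atTop, Z t ≤ M :=
    (Filter.eventually_ge_atTop (s (K + 1))).mono fun t ht => hub t ht
  have hfreq : ∃ᶠ t in Filter.atTop, M ≤ Z t := by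
    rw [Filter.frequently_atTop]
    intro a
    obtain ⟨n1, hn1⟩ := exists_nat_gt ((a - s (kb₀.1 + 1)) / T)
    set n : ℕ := max n1 K.toNat with hn
    have hk₀1 : (1 : ℤ) ≤ kb₀.1 := (Finset.mem_Icc.1 hk₀mem).1
    have hl1 : (1 : ℤ) ≤ (ℓ : ℤ) := by exact_mod_cast hℓ
    have hs1 : s (kb₀.1 + (n : ℤ) * ℓ + 1) = s (kb₀.1 + 1) + n * T := by
      rw [show kb₀.1 + (n : ℤ) * ℓ + 1 = (kb₀.1 + 1) + (n : ℤ) * ℓ by ring, hsn]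
    refine ⟨s (kb₀.1 + (n : ℤ) * ℓ + 1), ?_, ?_⟩
    · rw [hs1]
      have hn1n : (n1 : ℝ) ≤ (n : ℝ) := by exact_mod_cast le_max_left n1 K.toNat
      rw [div_lt_iff₀ hT] at hn1
      have hmul : (n1 : ℝ) * T ≤ (n : ℝ) * T := mul_le_mul_of_nonneg_right hn1n hT.le
      linarith
    · have hkK : K ≤ kb₀.1 + (n : ℤ) * ℓ := by
        have h1 : (K.toNat : ℤ) ≤ (n : ℤ) := by exact_mod_cast le_max_right n1 K.toNat
        have h2 : (K.toNat : ℤ) = K := Int.toNat_of_nonneg (by omega)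
        nlinarith
      have h := hEeq (kb₀.1 + (n : ℤ) * ℓ) hkK
      rw [h, hMkpern n kb₀.1, hMk₀]
  have hcob : Filter.IsCoboundedUnder (· ≤ ·) Filter.atTop Z :=
    Filter.isCoboundedUnder_le_of_le Filter.atTop (x := 0) fun t => hZ0 t
  have hlim : Filter.limsup Z Filter.atTop = M :=
    le_antisymm (Filter.limsup_le_of_le hcob hbdd)
      (Filter.le_limsup_of_frequently_le hfreq (Filter.isBoundedUnder_of_eventually_le hbdd))
  rw [hlim]
  constructor
  · refine ⟨kb₀.1, hk₀mem, kb₀.2, hb₀mem, ?_⟩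
    rw [hMeq]
    simp only [hX]
  · rintro x ⟨k, hk, b, hb, rfl⟩
    have h := hXleM k hk b (Finset.mem_range.1 hb)
    simpa only [hX] using h
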